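/- For any two k×n complex matrices A and B, the sup-norm distance between the empirical distribution functions of the eigenvalues of AA* and BB* satisfies ||F_{AA*} - F_{BB*}||_∞ ≤ rank(A - B)/k. -/

import Mathlib

open scoped Classical
open Matrix Finset

/-- Empirical spectral distribution function of a Hermitian matrix. -/
noncomputable def esd {m : Type*} [Fintype m] [DecidableEq m] {A : Matrix m m ℂ}
    (hA : A.IsHermitian) (x : ℝ) : ℝ :=
  ((Finset.univ.filter fun i => hA.eigenvalues i ≤ x).card : ℝ) / Fintype.card m

lemma rank_neg' {m n : ℕ} (M : Matrix (Fin m) (Fin n) ℂ) : (-M).rank = M.rank := by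
  have h : (-M).mulVecLin = -(M.mulVecLin) := by
    ext v i
    simp [Matrix.mulVecLin_apply, neg_mulVec]
  rw [Matrix.rank, Matrix.rank, h, LinearMap.range_neg]

lemma quad_self {k n : ℕ} (A : Matrix (Fin k) (Fin n) ℂ) (v : Fin k → ℂ) :
    star v ⬝ᵥ ((A * Aᴴ) *ᵥ v) = star (Aᴴ *ᵥ v) ⬝ᵥ (Aᴴ *ᵥ v) := by
  rw [← mulVec_mulVec, dotProduct_mulVec, star_mulVec, conjTranspose_conjTranspose]

lemma quad_spectral {k : ℕ} {M : Matrix (Fin k) (Fin k) ℂ} (hM : M.IsHermitian) (v : Fin k → ℂ) :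
    star v ⬝ᵥ (M *ᵥ v) =
      ∑ i, (hM.eigenvalues i : ℂ) *
        (Complex.normSq ((star (hM.eigenvectorUnitary : Matrix (Fin k) (Fin k) ℂ) *ᵥ v) i) : ℝ) := by
  set U : Matrix (Fin k) (Fin k) ℂ := (hM.eigenvectorUnitary : Matrix (Fin k) (Fin k) ℂ) with hU
  set w := star U *ᵥ v with hw
  have h1 : star v ᵥ* U = star w := by
    rw [hw, star_mulVec, star_eq_conjTranspose, conjTranspose_conjTranspose]
  calc star v ⬝ᵥ (M *ᵥ v)
      = star v ⬝ᵥ (U *ᵥ (diagonal (RCLike.ofReal ∘ hM.eigenvalues) *ᵥ w)) := by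
        conv_lhs => rw [hM.spectral_theorem, Unitary.conjStarAlgAut_apply]
        rw [mulVec_mulVec, mulVec_mulVec, ← hU]
    _ = star w ⬝ᵥ (diagonal (RCLike.ofReal ∘ hM.eigenvalues) *ᵥ w) := by
        rw [dotProduct_mulVec, h1]
    _ = ∑ i, (hM.eigenvalues i : ℂ) * (Complex.normSq (w i) : ℝ) := by
        simp only [dotProduct, mulVec_diagonal, Function.comp_apply]
        refine Finset.sum_congr rfl fun i _ => ?_
        rw [Complex.normSq_eq_conj_mul_self]
        simp [Pi.star_apply, Complex.star_def]
        ring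

lemma norm_spectral {k : ℕ} {M : Matrix (Fin k) (Fin k) ℂ} (hM : M.IsHermitian) (v : Fin k → ℂ) :
    star v ⬝ᵥ v =
      ∑ i, (Complex.normSq ((star (hM.eigenvectorUnitary : Matrix (Fin k) (Fin k) ℂ) *ᵥ v) i) : ℝ) := by
  set U : Matrix (Fin k) (Fin k) ℂ := (hM.eigenvectorUnitary : Matrix (Fin k) (Fin k) ℂ) with hU
  set w := star U *ᵥ v with hw
  have h1 : star v ᵥ* U = star w := by
    rw [hw, star_mulVec, star_eq_conjTranspose, conjTranspose_conjTranspose]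
  have h2 : star v ⬝ᵥ v = star w ⬝ᵥ w := by
    calc star v ⬝ᵥ v = star v ⬝ᵥ ((U * star U) *ᵥ v) := by
          rw [mem_unitaryGroup_iff.mp hM.eigenvectorUnitary.2, one_mulVec]
      _ = star v ⬝ᵥ (U *ᵥ w) := by rw [← mulVec_mulVec, ← hw]
      _ = (star v ᵥ* U) ⬝ᵥ w := dotProduct_mulVec _ _ _
      _ = star w ⬝ᵥ w := by rw [h1]
  rw [h2]
  simp only [dotProduct]
  push_cast
  apply Finset.sum_congr rfl
  intro i _
  rw [Complex.normSq_eq_conj_mul_self]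
  simp [Pi.star_apply, Complex.star_def]

set_option maxHeartbeats 1000000 in
set_option synthInstance.maxHeartbeats 400000 in
open scoped ComplexOrder in
lemma count_le {k n : ℕ} (A B : Matrix (Fin k) (Fin n) ℂ) (x : ℝ) :
    (Finset.univ.filter fun i =>
        (Matrix.isHermitian_mul_conjTranspose_self B).eigenvalues i ≤ x).card ≤
    (Finset.univ.filter fun i =>
        (Matrix.isHermitian_mul_conjTranspose_self A).eigenvalues i ≤ x).card + (A - B).rank := by
  have hA := Matrix.isHermitian_mul_conjTranspose_self A
  have hB := Matrix.isHermitian_mul_conjTranspose_self B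
  set μ : Fin k → ℝ := hA.eigenvalues with hμ
  set ν : Fin k → ℝ := hB.eigenvalues with hν
  let E : ({i // ν i ≤ x} → ℂ) →ₗ[ℂ] (Fin k → ℂ) :=
    { toFun := fun c i => if h : ν i ≤ x then c ⟨i, h⟩ else 0
      map_add' := fun c d => by funext i; by_cases h : ν i ≤ x <;> simp [h]
      map_smul' := fun a c => by funext i; by_cases h : ν i ≤ x <;> simp [h] }
  let h : ({i // ν i ≤ x} → ℂ) →ₗ[ℂ] (Fin k → ℂ) :=
    (Matrix.mulVecLin ((hB.eigenvectorUnitary : Matrix (Fin k) (Fin k) ℂ))).comp E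
  have hUBinv : ∀ y : Fin k → ℂ,
      star (hB.eigenvectorUnitary : Matrix (Fin k) (Fin k) ℂ) *ᵥ
        ((hB.eigenvectorUnitary : Matrix (Fin k) (Fin k) ℂ) *ᵥ y) = y := fun y => by
    rw [mulVec_mulVec, mem_unitaryGroup_iff'.mp hB.eigenvectorUnitary.2, one_mulVec]
  have hinj : Function.Injective h := by
    intro c d hcd
    have h1 : E c = E d := by
      have hcd' : (hB.eigenvectorUnitary : Matrix (Fin k) (Fin k) ℂ) *ᵥ E c
          = (hB.eigenvectorUnitary : Matrix (Fin k) (Fin k) ℂ) *ᵥ E d := hcd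
      rw [← hUBinv (E c), ← hUBinv (E d), hcd']
    funext j
    have h3 := congrFun h1 j.1
    simpa only [E, LinearMap.coe_mk, AddHom.coe_mk, dif_pos j.2] using h3
  set V := LinearMap.range h with hV
  have hVcard : Module.finrank ℂ V = (Finset.univ.filter fun i => ν i ≤ x).card := by
    rw [LinearMap.finrank_range_of_inj hinj, Module.finrank_fintype_fun_eq_card,
      Fintype.card_subtype]
  let f1 : V →ₗ[ℂ] (Fin n → ℂ) := (Matrix.mulVecLin (A - B)ᴴ).comp V.subtype
  have hrank1 : Module.finrank ℂ (LinearMap.range f1) ≤ (A - B).rank := by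
    have hle : LinearMap.range f1 ≤ LinearMap.range (Matrix.mulVecLin (A - B)ᴴ) :=
      LinearMap.range_comp_le_range _ _
    have h4 := Submodule.finrank_mono hle
    rwa [show Module.finrank ℂ
        (LinearMap.range (Matrix.mulVecLin (A - B)ᴴ)) = ((A - B)ᴴ).rank from rfl,
      Matrix.rank_conjTranspose] at h4
  let f2 : (LinearMap.ker f1) →ₗ[ℂ] ({i // μ i ≤ x} → ℂ) :=
    (LinearMap.funLeft ℂ ℂ Subtype.val).comp
      ((Matrix.mulVecLin (star (hA.eigenvectorUnitary : Matrix (Fin k) (Fin k) ℂ))).comp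
        (V.subtype.comp (LinearMap.ker f1).subtype))
  have hinj2 : Function.Injective f2 := by
    suffices hzero : ∀ p, f2 p = 0 → p = 0 by
      intro p q hpq
      have hd : f2 (p - q) = 0 := by
        have := map_sub f2 p q
        rw [this, hpq, sub_self]
      exact sub_eq_zero.mp (hzero _ hd)
    intro p hp
    set v : Fin k → ℂ := ((p : V) : Fin k → ℂ) with hv
    set wA : Fin k → ℂ :=
      star (hA.eigenvectorUnitary : Matrix (Fin k) (Fin k) ℂ) *ᵥ v with hwAdef
    set wB : Fin k → ℂ :=
      star (hB.eigenvectorUnitary : Matrix (Fin k) (Fin k) ℂ) *ᵥ v with hwBdef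
    have hker : (A - B)ᴴ *ᵥ v = 0 := p.2
    have hAB : Aᴴ *ᵥ v = Bᴴ *ᵥ v := by
      have h5 := hker
      rwa [conjTranspose_sub, sub_mulVec, sub_eq_zero] at h5
    obtain ⟨c, hc⟩ := (p : V).2
    have hwB : wB = E c := by
      rw [hwBdef, hv, ← hc]
      exact hUBinv (E c)
    have hwB0 : ∀ i, ¬ ν i ≤ x → wB i = 0 := by
      intro i hi
      rw [hwB]
      exact dif_neg hi
    have hwA0 : ∀ i, μ i ≤ x → wA i = 0 := by
      intro i hi
      exact congrFun hp ⟨i, hi⟩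
    have eqC : ∑ i, (μ i : ℂ) * (Complex.normSq (wA i) : ℝ)
        = ∑ i, (ν i : ℂ) * (Complex.normSq (wB i) : ℝ) := by
      rw [← quad_spectral hA v, ← quad_spectral hB v, quad_self A v, quad_self B v, hAB]
    have eqR : ∑ i, μ i * Complex.normSq (wA i) = ∑ i, ν i * Complex.normSq (wB i) := by
      exact_mod_cast eqC
    have normC : ∑ i, Complex.normSq (wA i) = ∑ i, Complex.normSq (wB i) := by
      have h6 := norm_spectral hA v
      have h7 := norm_spectral hB v
      exact_mod_cast h6.symm.trans h7
    have key : ∑ i, ν i * Complex.normSq (wB i) ≤ x * ∑ i, Complex.normSq (wB i) := by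
      rw [Finset.mul_sum]
      apply Finset.sum_le_sum
      intro i _
      by_cases hi : ν i ≤ x
      · exact mul_le_mul_of_nonneg_right hi (Complex.normSq_nonneg _)
      · rw [hwB0 i hi]
        simp
    have key2 : ∑ i, μ i * Complex.normSq (wA i) ≤ x * ∑ i, Complex.normSq (wA i) := by
      rw [eqR, normC]
      exact key
    have hterm : ∀ i ∈ Finset.univ, 0 ≤ (μ i - x) * Complex.normSq (wA i) := by
      intro i _
      by_cases hi : μ i ≤ x
      · rw [hwA0 i hi]
        simp
      · exact mul_nonneg (by linarith [not_le.mp hi]) (Complex.normSq_nonneg _)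
    have expand : ∑ i, (μ i - x) * Complex.normSq (wA i)
        = (∑ i, μ i * Complex.normSq (wA i)) - x * ∑ i, Complex.normSq (wA i) := by
      rw [Finset.mul_sum, ← Finset.sum_sub_distrib]
      apply Finset.sum_congr rfl
      intro i _
      ring
    have hsum0 : ∑ i, (μ i - x) * Complex.normSq (wA i) = 0 := by
      refine le_antisymm ?_ (Finset.sum_nonneg hterm)
      rw [expand]
      linarith
    have hall : ∀ i, wA i = 0 := by
      intro i
      by_cases hi : μ i ≤ x
      · exact hwA0 i hi
      · have h8 := (Finset.sum_eq_zero_iff_of_nonneg hterm).mp hsum0 i (Finset.mem_univ i)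
        have hne : μ i - x ≠ 0 := by
          have := not_le.mp hi
          intro hcontra
          linarith
        rcases mul_eq_zero.mp h8 with h9 | h9
        · exact absurd h9 hne
        · exact Complex.normSq_eq_zero.mp h9
    have hv0 : v = 0 := by
      have h10 : (hA.eigenvectorUnitary : Matrix (Fin k) (Fin k) ℂ) *ᵥ wA = v := by
        rw [hwAdef, mulVec_mulVec, mem_unitaryGroup_iff.mp hA.eigenvectorUnitary.2, one_mulVec]
      have hwAzero : wA = 0 := funext hall
      rw [← h10, hwAzero, mulVec_zero]
    exact Subtype.ext (Subtype.ext hv0)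
  have main := LinearMap.finrank_range_add_finrank_ker f1
  have hker_le : Module.finrank ℂ (LinearMap.ker f1)
      ≤ (Finset.univ.filter fun i => μ i ≤ x).card := by
    have h11 := LinearMap.finrank_le_finrank_of_injective hinj2
    rwa [Module.finrank_fintype_fun_eq_card, Fintype.card_subtype] at h11
  calc (Finset.univ.filter fun i => ν i ≤ x).card
      = Module.finrank ℂ V := hVcard.symm
    _ = Module.finrank ℂ (LinearMap.range f1) + Module.finrank ℂ (LinearMap.ker f1) := main.symm
    _ ≤ (A - B).rank + (Finset.univ.filter fun i => μ i ≤ x).card := add_le_add hrank1 hker_le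
    _ = (Finset.univ.filter fun i => μ i ≤ x).card + (A - B).rank := add_comm _ _

/-- For any two `k × n` complex matrices `A, B`,
`‖F_{AA*} - F_{BB*}‖_∞ ≤ rank (A - B) / k`. -/
theorem sup_dist_esd_mul_conjTranspose_le_rank_div {k n : ℕ} (hk : 0 < k)
    (A B : Matrix (Fin k) (Fin n) ℂ) :
    ⨆ x : ℝ, |esd (Matrix.isHermitian_mul_conjTranspose_self A) x -
        esd (Matrix.isHermitian_mul_conjTranspose_self B) x| ≤ ((A - B).rank : ℝ) / k := by
  apply ciSup_le
  intro x
  have h1 := count_le A B x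
  have h2 := count_le B A x
  rw [show B - A = -(A - B) from (neg_sub A B).symm, rank_neg'] at h2
  rw [esd, esd, Fintype.card_fin]
  set cA := (Finset.univ.filter fun i =>
      (Matrix.isHermitian_mul_conjTranspose_self A).eigenvalues i ≤ x).card with hcA
  set cB := (Finset.univ.filter fun i =>
      (Matrix.isHermitian_mul_conjTranspose_self B).eigenvalues i ≤ x).card with hcB
  have hkpos : (0 : ℝ) < k := by exact_mod_cast hk
  rw [div_sub_div_same, abs_div, abs_of_pos hkpos]
  have h1' : (cB : ℝ) ≤ cA + (A - B).rank := by exact_mod_cast h1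
  have h2' : (cA : ℝ) ≤ cB + (A - B).rank := by exact_mod_cast h2
  have habs : |(cA : ℝ) - cB| ≤ ((A - B).rank : ℝ) :=
    abs_sub_le_iff.mpr ⟨by linarith, by linarith⟩
  gcongr
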